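/- Meixner polynomials M_n associated with the geometric distribution μ(x) = (1−p)p^x on ℕ (0 < p < 1), defined by M₀ = 1, M₁(x) = 1 − p − x/p (up to normalization) and the recurrence (p/(1−p)) M_{n+1}(x) = ((p−1)x + (1+p)n + p) M_n(x) − (1−p) n² M_{n−1}(x), are orthogonal: for m ≠ n, ∑_{x=0}^∞ M_m(x) M_n(x) (1−p) p^x = 0. -/

import Mathlib

open Polynomial

/-- The Meixner polynomials associated with the geometric distribution
`μ(x) = (1−p)p^x` on `ℕ`: `M₀ = 1`, `M₁` determined by the recurrence
`(p/(1−p)) M_{n+1}(x) = ((p−1)x + (1+p)n + p) M_n(x) − (1−p) n² M_{n−1}(x)`. -/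
noncomputable def meixner (p : ℝ) : ℕ → Polynomial ℝ
  | 0 => 1
  | 1 => C ((1 - p) / p) * (C (p - 1) * X + C p)
  | (n + 2) =>
      C ((1 - p) / p) *
        ((C (p - 1) * X + C ((1 + p) * ((n : ℝ) + 1) + p)) * meixner p (n + 1)
          - C ((1 - p) * ((n : ℝ) + 1) ^ 2) * meixner p n)

/-- The three-term recurrence, multiplied by `p` to clear denominators,
uniform in `n` (using truncated subtraction at `n = 0`). -/
lemma meixner_rec (p : ℝ) (hp : p ≠ 0) (n : ℕ) (x : ℝ) :
    p * (meixner p (n + 1)).eval x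
      = (1 - p) * (((p - 1) * x + ((1 + p) * (n : ℝ) + p)) * (meixner p n).eval x
          - (1 - p) * (n : ℝ) ^ 2 * (meixner p (n - 1)).eval x) := by
  cases n with
  | zero =>
      simp only [meixner, Nat.cast_zero, eval_mul, eval_add, eval_C, eval_X, eval_one]
      field_simp
      ring
  | succ m =>
      show p * (meixner p (m + 2)).eval x = _
      simp only [meixner, eval_mul, eval_add, eval_sub, eval_C, eval_X, Nat.add_sub_cancel]
      push_cast
      field_simp

/-- The second-order difference equation (eigenvalue equation) for the Meixner
polynomials, together with the companion identity for the "odd" combination. -/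
lemma meixner_LD (p : ℝ) (hp : p ≠ 0) : ∀ (n : ℕ) (x : ℝ),
    p * (x + 1) * (meixner p n).eval (x + 1) + x * (meixner p n).eval (x - 1)
      = (x + p * (x + 1)) * (meixner p n).eval x
          + (n : ℝ) * (p - 1) * (meixner p n).eval x
  ∧ p * (x + 1) * (meixner p n).eval (x + 1) - x * (meixner p n).eval (x - 1)
      = ((p - 1) * x + (1 + p) * (n : ℝ) + p) * (meixner p n).eval x
          - 2 * (1 - p) * (n : ℝ) ^ 2 * (meixner p (n - 1)).eval x := by
  intro n
  induction n using Nat.strong_induction_on with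
  | _ n ih =>
    match n with
    | 0 =>
        intro x
        simp only [meixner, Nat.cast_zero, eval_one, Nat.zero_sub]
        constructor <;> ring
    | 1 =>
        intro x
        simp only [meixner, Nat.cast_one, eval_mul, eval_add, eval_C, eval_X, eval_one]
        constructor
        · field_simp
          ring
        · field_simp
          simp only [Nat.sub_self, meixner, eval_one]
          ring
    | (n + 2) =>
        intro x
        obtain ⟨h1, h2⟩ := ih (n + 1) (by omega) x
        obtain ⟨h3, h4⟩ := ih n (by omega) x
        have ha := meixner_rec p hp (n + 1) (x + 1)
        have hb := meixner_rec p hp (n + 1) x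
        have hc := meixner_rec p hp (n + 1) (x - 1)
        have hr := meixner_rec p hp n x
        simp only [Nat.add_sub_cancel] at h2 ha hb hc ⊢
        push_cast at h1 h2 h3 h4 ha hb hc hr ⊢
        constructor
        · refine mul_left_cancel₀ hp ?_
          linear_combination (p * (x + 1)) * ha + x * hc
            - (x + p * (x + 1) + ((n : ℝ) + 2) * (p - 1)) * hb
            + (1 - p) * ((p - 1) * x + ((1 + p) * ((n : ℝ) + 1) + p)) * h1
            + (1 - p) * (p - 1) * h2
            - (1 - p) * (1 - p) * ((n : ℝ) + 1) ^ 2 * h3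
        · refine mul_left_cancel₀ hp ?_
          linear_combination (p * (x + 1)) * ha - x * hc
            - ((p - 1) * x + (1 + p) * ((n : ℝ) + 2) + p) * hb
            + ((1 - p) * (p - 1) * x + (1 - p) ^ 2 * (x - 1)) * h1
            + ((1 - p) * ((p - 1) * x + ((1 + p) * ((n : ℝ) + 1) + p) + (p - 1))
                + (1 - p) ^ 2) * h2
            - (1 - p) ^ 2 * ((n : ℝ) + 1) ^ 2 * h4
            + 2 * (1 - p) * ((n : ℝ) + 1) ^ 2 * hr

/-- Polynomial times geometric is summable. -/
lemma summable_poly_geom (p : ℝ) (hp : |p| < 1) (q : Polynomial ℝ) :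
    Summable (fun x : ℕ => q.eval (x : ℝ) * p ^ x) := by
  induction q using Polynomial.induction_on' with
  | add f g hf hg =>
      exact (hf.add hg).congr fun x => by simp [eval_add, add_mul]
  | monomial i a =>
      have h := summable_pow_mul_geometric_of_norm_lt_one (R := ℝ) i
        (by rwa [Real.norm_eq_abs])
      exact (h.mul_left a).congr fun x => by
        simp only [eval_monomial]
        ring

lemma tsum_shift (u : ℕ → ℝ) (hu : Summable u) (h0 : u 0 = 0) :
    ∑' x : ℕ, u x = ∑' x : ℕ, u (x + 1) := by
  rw [hu.tsum_eq_zero_add, h0, zero_add]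

/-- The Meixner polynomials are orthogonal with respect to the geometric
distribution `(1−p)p^x` on `ℕ`: for `m ≠ n`,
`∑_{x=0}^∞ M_m(x) M_n(x) (1−p) p^x = 0`. -/
theorem meixner_orthogonal (p : ℝ) (hp0 : 0 < p) (hp1 : p < 1)
    {m n : ℕ} (hmn : m ≠ n) :
    ∑' x : ℕ, (meixner p m).eval (x : ℝ) * (meixner p n).eval (x : ℝ)
      * (1 - p) * p ^ x = 0 := by
  have hp : p ≠ 0 := ne_of_gt hp0
  have hpa : |p| < 1 := abs_lt.mpr ⟨by linarith, hp1⟩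
  -- summability of all the relevant series
  have s1 : ∀ a b : ℕ, Summable (fun x : ℕ =>
      p * ((x : ℝ) + 1) * (meixner p a).eval ((x : ℝ) + 1) * (meixner p b).eval (x : ℝ)
        * (1 - p) * p ^ x) := by
    intro a b
    refine (summable_poly_geom p hpa
      (C p * (X + 1) * ((meixner p a).comp (X + C 1)) * meixner p b * C (1 - p))).congr
      fun x => ?_
    simp only [eval_mul, eval_add, eval_C, eval_X, eval_one, eval_comp]
  have s2 : ∀ a b : ℕ, Summable (fun x : ℕ =>
      (x : ℝ) * (meixner p a).eval ((x : ℝ) - 1) * (meixner p b).eval (x : ℝ)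
        * (1 - p) * p ^ x) := by
    intro a b
    refine (summable_poly_geom p hpa
      (X * ((meixner p a).comp (X - C 1)) * meixner p b * C (1 - p))).congr
      fun x => ?_
    simp only [eval_mul, eval_sub, eval_C, eval_X, eval_comp]
  have s3 : ∀ a b : ℕ, Summable (fun x : ℕ =>
      ((x : ℝ) + p * ((x : ℝ) + 1)) * (meixner p a).eval (x : ℝ)
        * (meixner p b).eval (x : ℝ) * (1 - p) * p ^ x) := by
    intro a b
    refine (summable_poly_geom p hpa
      ((X + C p * (X + C 1)) * meixner p a * meixner p b * C (1 - p))).congr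
      fun x => ?_
    simp only [eval_mul, eval_add, eval_C, eval_X]
  have s0 : ∀ a b : ℕ, Summable (fun x : ℕ =>
      (meixner p a).eval (x : ℝ) * (meixner p b).eval (x : ℝ) * (1 - p) * p ^ x) := by
    intro a b
    refine (summable_poly_geom p hpa (meixner p a * meixner p b * C (1 - p))).congr
      fun x => ?_
    simp only [eval_mul, eval_C]
  -- the key balance equation from the difference equation
  have key : ∀ a b : ℕ,
      (∑' x : ℕ, p * ((x : ℝ) + 1) * (meixner p a).eval ((x : ℝ) + 1)
          * (meixner p b).eval (x : ℝ) * (1 - p) * p ^ x)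
        + (∑' x : ℕ, (x : ℝ) * (meixner p a).eval ((x : ℝ) - 1)
          * (meixner p b).eval (x : ℝ) * (1 - p) * p ^ x)
      = (∑' x : ℕ, ((x : ℝ) + p * ((x : ℝ) + 1)) * (meixner p a).eval (x : ℝ)
          * (meixner p b).eval (x : ℝ) * (1 - p) * p ^ x)
        + (a : ℝ) * (p - 1)
          * (∑' x : ℕ, (meixner p a).eval (x : ℝ) * (meixner p b).eval (x : ℝ)
            * (1 - p) * p ^ x) := by
    intro a b
    rw [← Summable.tsum_add (s1 a b) (s2 a b), ← tsum_mul_left, ← Summable.tsum_add (s3 a b)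
      (Summable.mul_left _ (s0 a b))]
    refine tsum_congr fun x => ?_
    have h := (meixner_LD p hp a (x : ℝ)).1
    linear_combination ((meixner p b).eval (x : ℝ) * ((1 - p) * p ^ x)) * h
  -- the shift identity
  have hshift : ∀ a b : ℕ,
      (∑' x : ℕ, (x : ℝ) * (meixner p a).eval ((x : ℝ) - 1)
          * (meixner p b).eval (x : ℝ) * (1 - p) * p ^ x)
      = ∑' x : ℕ, p * ((x : ℝ) + 1) * (meixner p b).eval ((x : ℝ) + 1)
          * (meixner p a).eval (x : ℝ) * (1 - p) * p ^ x := by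
    intro a b
    rw [tsum_shift _ (s2 a b) (by simp)]
    refine tsum_congr fun x => ?_
    push_cast
    rw [add_sub_cancel_right]
    ring
  have e1 := key m n
  have e2 := key n m
  rw [hshift m n] at e1
  rw [hshift n m] at e2
  have hsym3 : (∑' x : ℕ, ((x : ℝ) + p * ((x : ℝ) + 1)) * (meixner p m).eval (x : ℝ)
        * (meixner p n).eval (x : ℝ) * (1 - p) * p ^ x)
      = ∑' x : ℕ, ((x : ℝ) + p * ((x : ℝ) + 1)) * (meixner p n).eval (x : ℝ)
        * (meixner p m).eval (x : ℝ) * (1 - p) * p ^ x :=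
    tsum_congr fun x => by ring
  have hsymI : (∑' x : ℕ, (meixner p m).eval (x : ℝ) * (meixner p n).eval (x : ℝ)
        * (1 - p) * p ^ x)
      = ∑' x : ℕ, (meixner p n).eval (x : ℝ) * (meixner p m).eval (x : ℝ)
        * (1 - p) * p ^ x :=
    tsum_congr fun x => by ring
  have hz : ((m : ℝ) - (n : ℝ)) * (p - 1)
      * (∑' x : ℕ, (meixner p m).eval (x : ℝ) * (meixner p n).eval (x : ℝ)
        * (1 - p) * p ^ x) = 0 := by
    linear_combination (-1 : ℝ) * e1 + e2 - hsym3 - ((n : ℝ) * (p - 1)) * hsymI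
  have hne : ((m : ℝ) - (n : ℝ)) * (p - 1) ≠ 0 := by
    refine mul_ne_zero (sub_ne_zero.mpr ?_) (by linarith)
    exact_mod_cast hmn
  exact (mul_eq_zero.mp hz).resolve_left hne
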